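/- Let A ∈ ℂ^{m×n×p}, W ∈ ℂ^{n×m×p}, with rank_M(A) = rp and rank_M(W) = sp where sp ≤ rp. Suppose W = B *_M C is a full-rank decomposition, i.e., B ∈ ℂ^{n×s×p}, C ∈ ℂ^{s×m×p} and rank_M(B) = rank_M(C) = sp, and suppose there exists an outer inverse X of A with R_M(X) = R_M(W) and N_M(X) = N_M(W). Then the tensor C *_M A *_M B ∈ ℂ^{s×s×p} is invertible, X = B *_M (C *_M A *_M B)^{-1} *_M C, and moreover R_M(X) = R_M(B) and N_M(X) = N_M(C). -/

import Mathlib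

open Matrix Finset

/-- A third-order tensor in `ℂ^{m×n×p}`, given by its `p` frontal slices. -/
abbrev Tensor (m n p : ℕ) := Fin p → Matrix (Fin m) (Fin n) ℂ

/-- The transform `Â = A ×₃ M` (mode-3 product with `M`). -/
noncomputable def hatT {m n p : ℕ} (M : Matrix (Fin p) (Fin p) ℂ) (A : Tensor m n p) :
    Tensor m n p :=
  fun l => ∑ s, M l s • A s

/-- `mat(A)`: the block-diagonal matrix whose blocks are frontal slices of `A ×₃ M`. -/
noncomputable def matT {m n p : ℕ} (M : Matrix (Fin p) (Fin p) ℂ) (A : Tensor m n p) :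
    Matrix (Fin m × Fin p) (Fin n × Fin p) ℂ :=
  Matrix.blockDiagonal (hatT M A)

/-- The M-product `A *_M B`, determined by `mat(A *_M B) = mat(A)·mat(B)`. -/
noncomputable def mprod {m n k p : ℕ} (M : Matrix (Fin p) (Fin p) ℂ)
    (A : Tensor m n p) (B : Tensor n k p) : Tensor m k p :=
  fun l => ∑ s, M⁻¹ l s • (hatT M A s * hatT M B s)

/-- The conjugate transpose `A^*`, determined by `mat(A^*) = mat(A)^*`. -/
noncomputable def mstar {m n p : ℕ} (M : Matrix (Fin p) (Fin p) ℂ) (A : Tensor m n p) :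
    Tensor n m p :=
  fun l => ∑ s, M⁻¹ l s • (hatT M A s)ᴴ

/-- The identity tensor `I_M ∈ ℂ^{m×m×p}`, determined by `mat(I_M) = I`. -/
noncomputable def idT {p : ℕ} (M : Matrix (Fin p) (Fin p) ℂ) (m : ℕ) : Tensor m m p :=
  fun l => ∑ s, M⁻¹ l s • (1 : Matrix (Fin m) (Fin m) ℂ)

/-- M-product powers of a square tensor. -/
noncomputable def mpow {m p : ℕ} (M : Matrix (Fin p) (Fin p) ℂ) (A : Tensor m m p) :
    ℕ → Tensor m m p
  | 0 => idT M m
  | k + 1 => mprod M A (mpow M A k)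

/-- `R_M(A)`: the column space of `mat(A)`. -/
noncomputable def rangeM {m n p : ℕ} (M : Matrix (Fin p) (Fin p) ℂ) (A : Tensor m n p) :
    Submodule ℂ (Fin m × Fin p → ℂ) :=
  LinearMap.range (matT M A).mulVecLin

/-- `N_M(A)`: the kernel of `mat(A)`. -/
noncomputable def kerM {m n p : ℕ} (M : Matrix (Fin p) (Fin p) ℂ) (A : Tensor m n p) :
    Submodule ℂ (Fin n × Fin p → ℂ) :=
  LinearMap.ker (matT M A).mulVecLin

/-- `rank_M(A) = rank(mat(A))`. -/
noncomputable def rankM {m n p : ℕ} (M : Matrix (Fin p) (Fin p) ℂ) (A : Tensor m n p) : ℕ :=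
  (matT M A).rank

/-- The first `s` lateral slices `Q(:,1:s,:)`. -/
def latSlice {n s p : ℕ} (hsn : s ≤ n) (Q : Tensor n n p) : Tensor n s p :=
  fun l => (Q l).submatrix id (Fin.castLE hsn)

/-- The first `s` horizontal slices `R(1:s,:,:)`. -/
def horSlice {n m s p : ℕ} (hsn : s ≤ n) (R : Tensor n m p) : Tensor s m p :=
  fun l => (R l).submatrix (Fin.castLE hsn) id

/-- Frobenius norm of a complex matrix. -/
noncomputable def frobNorm {α β : Type*} [Fintype α] [Fintype β] (X : Matrix α β ℂ) : ℝ :=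
  Real.sqrt (∑ i, ∑ j, ‖X i j‖ ^ 2)
open Module ComplexOrder

section MatrixHelpers

variable {I J K : Type*} [Fintype I] [Fintype J] [Fintype K]
  [DecidableEq I] [DecidableEq J] [DecidableEq K]

lemma ker_eq_bot_of_rank_eq_card (X : Matrix J K ℂ) (h : X.rank = Fintype.card K) :
    LinearMap.ker X.mulVecLin = ⊥ := by
  have h1 := LinearMap.finrank_range_add_finrank_ker X.mulVecLin
  have h2 : finrank ℂ (K → ℂ) = Fintype.card K := Module.finrank_pi ℂ
  have h3 : X.rank = finrank ℂ (LinearMap.range X.mulVecLin) := rfl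
  have : finrank ℂ (LinearMap.ker X.mulVecLin) = 0 := by omega
  exact Submodule.finrank_eq_zero.mp this

lemma range_eq_top_of_rank_eq_card (X : Matrix J K ℂ) (h : X.rank = Fintype.card J) :
    LinearMap.range X.mulVecLin = ⊤ := by
  apply Submodule.eq_top_of_finrank_eq
  rw [show finrank ℂ (LinearMap.range X.mulVecLin) = X.rank from rfl, h,
    Module.finrank_pi ℂ]

lemma isUnit_det_of_rank_eq_card (u : Matrix K K ℂ) (h : u.rank = Fintype.card K) :
    IsUnit u.det := by
  have hk := ker_eq_bot_of_rank_eq_card u h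
  have hinj : Function.Injective u.mulVec := by
    have := LinearMap.ker_eq_bot.mp hk
    intro v w hvw
    exact this (by simpa [Matrix.mulVecLin_apply] using hvw)
  exact (Matrix.isUnit_iff_isUnit_det u).mp (Matrix.mulVec_injective_iff_isUnit.mp hinj)

lemma isUnit_det_ctm (b : Matrix J K ℂ) (h : b.rank = Fintype.card K) :
    IsUnit (bᴴ * b).det := by
  have hk : LinearMap.ker (bᴴ * b).mulVecLin = ⊥ := by
    rw [Matrix.ker_mulVecLin_conjTranspose_mul_self]
    exact ker_eq_bot_of_rank_eq_card b h
  apply isUnit_det_of_rank_eq_card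
  have h1 := LinearMap.finrank_range_add_finrank_ker (bᴴ * b).mulVecLin
  rw [hk] at h1
  simp only [finrank_bot, add_zero] at h1
  rw [show (bᴴ * b).rank = finrank ℂ (LinearMap.range (bᴴ * b).mulVecLin) from rfl, h1,
    Module.finrank_pi ℂ]

lemma left_inv_of_rank (b : Matrix J K ℂ) (h : b.rank = Fintype.card K) :
    ((bᴴ * b)⁻¹ * bᴴ) * b = 1 := by
  rw [Matrix.mul_assoc]
  exact Matrix.nonsing_inv_mul _ (isUnit_det_ctm b h)

lemma right_inv_of_rank (c : Matrix K I ℂ) (h : c.rank = Fintype.card K) :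
    c * (cᴴ * (c * cᴴ)⁻¹) = 1 := by
  have hu : IsUnit (c * cᴴ).det := by
    have := isUnit_det_ctm cᴴ (by rw [Matrix.rank_conjTranspose, h])
    simpa using this
  rw [← Matrix.mul_assoc]
  exact Matrix.mul_nonsing_inv _ hu

lemma eq_of_mulVec_eq {P Q : Matrix I J ℂ} (h : ∀ v, P *ᵥ v = Q *ᵥ v) : P = Q := by
  ext i j
  have := congrFun (h (Pi.single j 1)) i
  simpa using this

lemma mul_left_cancel_range {b : Matrix J K ℂ} {b' : Matrix K J ℂ} (hb' : b' * b = 1)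
    {x : Matrix J I ℂ} (hx : LinearMap.range x.mulVecLin ≤ LinearMap.range b.mulVecLin) :
    b * (b' * x) = x := by
  apply eq_of_mulVec_eq
  intro v
  obtain ⟨z, hz⟩ := hx ⟨v, rfl⟩
  simp only [Matrix.mulVecLin_apply] at hz
  rw [← Matrix.mulVec_mulVec, ← Matrix.mulVec_mulVec, ← hz,
    Matrix.mulVec_mulVec z b' b, hb', Matrix.one_mulVec]

lemma mul_right_cancel_ker {c : Matrix K I ℂ} {c'' : Matrix I K ℂ} (hc'' : c * c'' = 1)
    {x : Matrix J I ℂ} (hx : LinearMap.ker c.mulVecLin ≤ LinearMap.ker x.mulVecLin) :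
    x * (c'' * c) = x := by
  apply eq_of_mulVec_eq
  intro v
  have hker : c *ᵥ (v - c'' *ᵥ (c *ᵥ v)) = 0 := by
    rw [Matrix.mulVec_sub, Matrix.mulVec_mulVec (c *ᵥ v) c c'', hc'', Matrix.one_mulVec,
      sub_self]
  have hx0 : x *ᵥ (v - c'' *ᵥ (c *ᵥ v)) = 0 := by
    have := hx (show _ ∈ LinearMap.ker c.mulVecLin by
      simpa [Matrix.mulVecLin_apply] using hker)
    simpa [Matrix.mulVecLin_apply] using this
  rw [Matrix.mulVec_sub] at hx0
  have h5 := sub_eq_zero.mp hx0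
  rw [← Matrix.mulVec_mulVec, ← Matrix.mulVec_mulVec]
  exact h5.symm

lemma matrix_key (a : Matrix I J ℂ) (x : Matrix J I ℂ) (b : Matrix J K ℂ) (c : Matrix K I ℂ)
    (hrx : x.rank = Fintype.card K) (hrb : b.rank = Fintype.card K)
    (hrc : c.rank = Fintype.card K)
    (hout : x * (a * x) = x)
    (hR : LinearMap.range x.mulVecLin = LinearMap.range (b * c).mulVecLin)
    (hN : LinearMap.ker x.mulVecLin = LinearMap.ker (b * c).mulVecLin) :
    ∃ u : Matrix K K ℂ, (c * (a * b)) * u = 1 ∧ u * (c * (a * b)) = 1 ∧ x = b * (u * c) ∧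
      LinearMap.range x.mulVecLin = LinearMap.range b.mulVecLin ∧
      LinearMap.ker x.mulVecLin = LinearMap.ker c.mulVecLin := by
  have hbker : LinearMap.ker b.mulVecLin = ⊥ := ker_eq_bot_of_rank_eq_card b hrb
  have hcsurj : LinearMap.range c.mulVecLin = ⊤ := range_eq_top_of_rank_eq_card c hrc
  have hRb : LinearMap.range (b * c).mulVecLin = LinearMap.range b.mulVecLin := by
    rw [Matrix.mulVecLin_mul, LinearMap.range_comp, hcsurj, Submodule.map_top]
  have hNc : LinearMap.ker (b * c).mulVecLin = LinearMap.ker c.mulVecLin := by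
    rw [Matrix.mulVecLin_mul]
    exact LinearMap.ker_comp_of_ker_eq_bot _ hbker
  have hRX : LinearMap.range x.mulVecLin = LinearMap.range b.mulVecLin := hR.trans hRb
  have hNX : LinearMap.ker x.mulVecLin = LinearMap.ker c.mulVecLin := hN.trans hNc
  obtain ⟨b', hb'⟩ : ∃ b' : Matrix K J ℂ, b' * b = 1 := ⟨_, left_inv_of_rank b hrb⟩
  obtain ⟨c'', hc''⟩ : ∃ c'' : Matrix I K ℂ, c * c'' = 1 := ⟨_, right_inv_of_rank c hrc⟩
  have hbx : b * (b' * x) = x := mul_left_cancel_range hb' hRX.le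
  have hxc : x * (c'' * c) = x := mul_right_cancel_ker hc'' hNX.ge
  set u : Matrix K K ℂ := b' * (x * c'') with hudef
  have hxu : b * (u * c) = x := by
    have h4 : b * (u * c) = b * (b' * (x * (c'' * c))) := by
      rw [hudef]; simp only [Matrix.mul_assoc]
    rw [h4, hxc, hbx]
  have hru : u.rank = Fintype.card K := by
    have h1 : u.rank ≤ Fintype.card K := Matrix.rank_le_card_width u
    have h2 : Fintype.card K ≤ u.rank := by
      calc Fintype.card K = x.rank := hrx.symm
      _ = (b * (u * c)).rank := by rw [hxu]
      _ ≤ (u * c).rank := Matrix.rank_mul_le_right b (u * c)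
      _ ≤ u.rank := Matrix.rank_mul_le_left u c
    omega
  have hu : IsUnit u.det := isUnit_det_of_rank_eq_card u hru
  have h2 : u * (c * (a * (b * u))) = u := by
    have h0 : b * (u * (c * (a * (b * (u * c))))) = b * (u * c) := by
      have h0' : (b * (u * c)) * (a * (b * (u * c))) = b * (u * c) := by
        rw [hxu]; exact hout
      simpa only [Matrix.mul_assoc] using h0'
    have h0'' : u * (c * (a * (b * (u * c)))) = u * c := by
      have h6 := congrArg (fun z => b' * z) h0
      simpa only [← Matrix.mul_assoc, hb', Matrix.one_mul] using h6
    have h7 := congrArg (fun z => z * c'') h0''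
    simpa only [Matrix.mul_assoc, hc'', Matrix.mul_one] using h7
  have htu : (c * (a * b)) * u = 1 := by
    have h3 := congrArg (fun z => u⁻¹ * z) h2
    simp only [← Matrix.mul_assoc] at h3
    rw [Matrix.nonsing_inv_mul u hu, Matrix.one_mul] at h3
    simpa [Matrix.mul_assoc] using h3
  have hut : u * (c * (a * b)) = 1 := by
    have h3 := congrArg (fun z => z * u⁻¹) h2
    simp only [Matrix.mul_assoc, Matrix.mul_nonsing_inv u hu, Matrix.mul_one] at h3
    exact h3
  exact ⟨u, htu, hut, hxu.symm, hRX, hNX⟩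

end MatrixHelpers


section TensorHelpers

variable {m n p : ℕ} {M : Matrix (Fin p) (Fin p) ℂ}

lemma hatT_inv_smul (hM : IsUnit M.det) (G : Fin p → Matrix (Fin m) (Fin n) ℂ) :
    hatT M (fun l => ∑ t, M⁻¹ l t • G t) = G := by
  funext l
  simp only [hatT]
  calc ∑ s, M l s • ∑ t, M⁻¹ s t • G t
      = ∑ s, ∑ t, (M l s * M⁻¹ s t) • G t := by
        simp [Finset.smul_sum, smul_smul]
  _ = ∑ t, (∑ s, M l s * M⁻¹ s t) • G t := by
        rw [Finset.sum_comm]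
        simp [Finset.sum_smul]
  _ = ∑ t, ((M * M⁻¹) l t) • G t := by simp [Matrix.mul_apply]
  _ = G l := by
        rw [Matrix.mul_nonsing_inv _ hM]
        simp [Matrix.one_apply, ite_smul]

lemma inv_smul_hatT (hM : IsUnit M.det) (A : Tensor m n p) :
    (fun l => ∑ t, M⁻¹ l t • hatT M A t) = A := by
  funext l
  simp only [hatT]
  calc ∑ t, M⁻¹ l t • ∑ s, M t s • A s
      = ∑ t, ∑ s, (M⁻¹ l t * M t s) • A s := by
        simp [Finset.smul_sum, smul_smul]
  _ = ∑ s, (∑ t, M⁻¹ l t * M t s) • A s := by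
        rw [Finset.sum_comm]
        simp [Finset.sum_smul]
  _ = ∑ s, ((M⁻¹ * M) l s) • A s := by simp [Matrix.mul_apply]
  _ = A l := by
        rw [Matrix.nonsing_inv_mul _ hM]
        simp [Matrix.one_apply, ite_smul]

lemma hatT_mprod {k : ℕ} (hM : IsUnit M.det) (A : Tensor m n p) (B : Tensor n k p) :
    hatT M (mprod M A B) = fun s => hatT M A s * hatT M B s := by
  unfold mprod
  exact hatT_inv_smul hM _

lemma matT_mprod {k : ℕ} (hM : IsUnit M.det) (A : Tensor m n p) (B : Tensor n k p) :
    matT M (mprod M A B) = matT M A * matT M B := by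
  unfold matT
  rw [hatT_mprod hM, Matrix.blockDiagonal_mul]

lemma matT_idT (hM : IsUnit M.det) (s : ℕ) :
    matT M (idT M s) = 1 := by
  unfold matT idT
  rw [hatT_inv_smul hM (fun _ => 1)]
  exact Matrix.blockDiagonal_one

lemma matT_injective (hM : IsUnit M.det) :
    Function.Injective (matT M : Tensor m n p → _) := by
  intro P Q h
  have h2 : hatT M P = hatT M Q := Matrix.blockDiagonal_injective h
  rw [← inv_smul_hatT hM P, ← inv_smul_hatT hM Q, h2]

end TensorHelpers

/-- Lemma 3.2: outer inverse via a full-rank decomposition `W = B *_M C`. -/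
theorem outer_inverse_full_rank_decomposition {m n p r s : ℕ}
    (M : Matrix (Fin p) (Fin p) ℂ) (hM : IsUnit M.det)
    (A : Tensor m n p) (W : Tensor n m p) (B : Tensor n s p) (C : Tensor s m p)
    (hrA : rankM M A = r * p) (hrW : rankM M W = s * p) (hle : s * p ≤ r * p)
    (hW : W = mprod M B C) (hrB : rankM M B = s * p) (hrC : rankM M C = s * p)
    (X : Tensor n m p)
    (hout : mprod M X (mprod M A X) = X)
    (hRX : rangeM M X = rangeM M W) (hNX : kerM M X = kerM M W) :
    ∃ Y : Tensor s s p,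
      mprod M (mprod M C (mprod M A B)) Y = idT M s ∧
      mprod M Y (mprod M C (mprod M A B)) = idT M s ∧
      X = mprod M B (mprod M Y C) ∧
      rangeM M X = rangeM M B ∧ kerM M X = kerM M C := by
  classical
  have hcard : Fintype.card (Fin s × Fin p) = s * p := by simp
  -- matrix-level data
  have hw : matT M W = matT M B * matT M C := by rw [hW, matT_mprod hM]
  have hrx : (matT M X).rank = Fintype.card (Fin s × Fin p) := by
    have h1 : (matT M X).rank = (matT M W).rank := by
      unfold Matrix.rank
      rw [show LinearMap.range (matT M X).mulVecLin = LinearMap.range (matT M W).mulVecLin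
        from hRX]
    rw [h1, show (matT M W).rank = s * p from hrW, hcard]
  have hrb : (matT M B).rank = Fintype.card (Fin s × Fin p) := by
    rw [show (matT M B).rank = s * p from hrB, hcard]
  have hrc : (matT M C).rank = Fintype.card (Fin s × Fin p) := by
    rw [show (matT M C).rank = s * p from hrC, hcard]
  have hout' : matT M X * (matT M A * matT M X) = matT M X := by
    have := congrArg (matT M) hout
    rwa [matT_mprod hM, matT_mprod hM] at this
  have hR' : LinearMap.range (matT M X).mulVecLin
      = LinearMap.range (matT M B * matT M C).mulVecLin := by
    rw [← hw]; exact hRX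
  have hN' : LinearMap.ker (matT M X).mulVecLin
      = LinearMap.ker (matT M B * matT M C).mulVecLin := by
    rw [← hw]; exact hNX
  obtain ⟨u, htu, hut, hxu, hRb, hNc⟩ :=
    matrix_key (matT M A) (matT M X) (matT M B) (matT M C) hrx hrb hrc hout' hR' hN'
  -- the tensor T = C *_M A *_M B and its transform blocks
  set T : Tensor s s p := mprod M C (mprod M A B) with hTdef
  have hmatT : matT M T = matT M C * (matT M A * matT M B) := by
    rw [hTdef, matT_mprod hM, matT_mprod hM]
  -- each block of hatT M T is invertible
  have hdetT : IsUnit (matT M T).det := by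
    apply IsUnit.of_mul_eq_one u.det
    rw [← Matrix.det_mul, hmatT, htu, Matrix.det_one]
  have hdetblocks : ∀ i, IsUnit (hatT M T i).det := by
    intro i
    have h1 : (matT M T).det = ∏ i, (hatT M T i).det := Matrix.det_blockDiagonal _
    rw [h1] at hdetT
    have h2 : (∏ i, (hatT M T i).det) ≠ 0 := hdetT.ne_zero
    have h3 := Finset.prod_ne_zero_iff.mp h2 i (Finset.mem_univ i)
    exact isUnit_iff_ne_zero.mpr h3
  -- construct Y
  set Y : Tensor s s p := fun l => ∑ t, M⁻¹ l t • (hatT M T t)⁻¹ with hYdef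
  have hmatY : matT M Y = Matrix.blockDiagonal fun i => (hatT M T i)⁻¹ := by
    unfold matT
    rw [hYdef, hatT_inv_smul hM]
  have hYT : matT M Y * matT M T = 1 := by
    rw [hmatY, show matT M T = Matrix.blockDiagonal (hatT M T) from rfl,
      ← Matrix.blockDiagonal_mul]
    have : (fun k => (hatT M T k)⁻¹ * hatT M T k) = fun _ => (1 : Matrix (Fin s) (Fin s) ℂ) := by
      funext k
      exact Matrix.nonsing_inv_mul _ (hdetblocks k)
    rw [this]
    exact Matrix.blockDiagonal_one
  have hTY : matT M T * matT M Y = 1 := by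
    rw [hmatY, show matT M T = Matrix.blockDiagonal (hatT M T) from rfl,
      ← Matrix.blockDiagonal_mul]
    have : (fun k => hatT M T k * (hatT M T k)⁻¹) = fun _ => (1 : Matrix (Fin s) (Fin s) ℂ) := by
      funext k
      exact Matrix.mul_nonsing_inv _ (hdetblocks k)
    rw [this]
    exact Matrix.blockDiagonal_one
  -- matT M Y = u
  have hYu : matT M Y = u := by
    calc matT M Y = matT M Y * (matT M T * u) := by rw [hmatT, htu, Matrix.mul_one]
    _ = (matT M Y * matT M T) * u := by rw [Matrix.mul_assoc]
    _ = u := by rw [hYT, Matrix.one_mul]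
  refine ⟨Y, ?_, ?_, ?_, ?_, ?_⟩
  · apply matT_injective hM
    rw [matT_mprod hM, matT_idT hM, hYu, hmatT, htu]
  · apply matT_injective hM
    rw [matT_mprod hM, matT_idT hM, hYu, hmatT, hut]
  · apply matT_injective hM
    rw [matT_mprod hM, matT_mprod hM, hYu, hxu]
  · exact hRb
  · exact hNc
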